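/- Let Π be a numerical semigroup and let Λ = Π ∖ {σ} and Λ′ = Π ∖ {σ′} be two children of Π (σ, σ′ right generators of Π) with F(Λ′) < F(Λ). If, for some integer γ, Λ′ has no descendant of genus γ, then Λ has no descendant of genus γ. -/

import Mathlib

open Pointwise

namespace NumSgpPaper

/-- `S` is a numerical semigroup: an additive submonoid of ℕ with finite complement. -/
structure IsNumSgp (S : Set ℕ) : Prop where
  zero_mem : 0 ∈ S
  add_mem : ∀ ⦃a b : ℕ⦄, a ∈ S → b ∈ S → a + b ∈ S
  cofinite : Sᶜ.Finite

/-- The Frobenius number: the largest gap of `S` (junk value `0` if there are no gaps). -/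
noncomputable def frob (S : Set ℕ) : ℕ := sSup Sᶜ

open Classical in
/-- The conductor: one plus the largest gap, and `0` if there are no gaps (so `c(ℕ) = 0`). -/
noncomputable def conductor (S : Set ℕ) : ℕ := if Sᶜ = ∅ then 0 else frob S + 1

/-- The genus: the number of gaps. -/
noncomputable def genus (S : Set ℕ) : ℕ := Sᶜ.ncard

/-- The multiplicity: the smallest positive element. -/
noncomputable def mult (S : Set ℕ) : ℕ := sInf {n : ℕ | n ∈ S ∧ 0 < n}

/-- The jump: the difference between the second and first positive elements. -/
noncomputable def jump (S : Set ℕ) : ℕ := sInf {n : ℕ | n ∈ S ∧ mult S < n} - mult S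

/-- A minimal generator: a positive element of `S` that is not the sum of
two positive elements of `S`. -/
def IsMinGen (S : Set ℕ) (x : ℕ) : Prop :=
  0 < x ∧ x ∈ S ∧ ¬ ∃ a b : ℕ, 0 < a ∧ 0 < b ∧ a ∈ S ∧ b ∈ S ∧ a + b = x

/-- A right generator: a minimal generator larger than the Frobenius number. -/
def IsRightGen (S : Set ℕ) (x : ℕ) : Prop := IsMinGen S x ∧ frob S < x

/-- A strong generator: a right generator `σ` such that `σ + m(S)` is a minimal
generator of `S \ {σ}`. -/
def IsStrongGen (S : Set ℕ) (σ : ℕ) : Prop :=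
  IsRightGen S σ ∧ IsMinGen (S \ {σ}) (σ + mult S)

/-- `S` is ordinary when its gaps are exactly `{1, …, g(S)}`. -/
def IsOrdinary (S : Set ℕ) : Prop := Sᶜ = Set.Icc 1 (genus S)

/-- The left elements: the elements of `S` smaller than the Frobenius number. -/
def leftEls (S : Set ℕ) : Set ℕ := {x : ℕ | x ∈ S ∧ x < frob S}

/-- The gcd of a set of natural numbers. -/
noncomputable def setGcd (A : Set ℕ) : ℕ :=
  sInf {d : ℕ | (∀ a ∈ A, d ∣ a) ∧ ∀ e : ℕ, (∀ a ∈ A, e ∣ a) → e ∣ d}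

/-- `ω(S)`: the gcd of the left elements of `S`. -/
noncomputable def omega' (S : Set ℕ) : ℕ := setGcd (leftEls S)

/-- The shrinking of `S`: the additive submonoid of ℕ generated by the left
elements divided by their gcd. -/
noncomputable def shrink (S : Set ℕ) : Set ℕ :=
  (AddSubmonoid.closure ((fun x => x / omega' S) '' leftEls S) : AddSubmonoid ℕ)

/-- `T` is a descendant of `S`: a numerical semigroup contained in `S` all of whose
missing elements lie beyond the Frobenius number of `S`. -/
def IsDescendant (S T : Set ℕ) : Prop :=
  IsNumSgp T ∧ T ⊆ S ∧ ∀ x ∈ S \ T, frob S < x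

/-- The pseudo-ordinary semigroup `P_{m,u} = {0, m} ∪ {n : n ≥ m + u}`. -/
def P (m u : ℕ) : Set ℕ := {0, m} ∪ {n : ℕ | m + u ≤ n}

/-- The submonoid of ℕ generated by the interval `{a, …, b}`. -/
def intervalSgp (a b : ℕ) : Set ℕ := (AddSubmonoid.closure (Set.Icc a b) : AddSubmonoid ℕ)


/-- If `Λ = T \ {σ}` and `Λ' = T \ {σ'}` are children of a numerical semigroup `T`
with `F(Λ') < F(Λ)`, and `Λ'` has no descendant of genus `γ`, then neither does `Λ`. -/
theorem stmt15 (T : Set ℕ) (hT : IsNumSgp T)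
    (σ σ' : ℕ) (hσ : IsRightGen T σ) (hσ' : IsRightGen T σ')
    (hF : frob (T \ {σ'}) < frob (T \ {σ}))
    (γ : ℕ) (hno : ¬ ∃ Λ'' : Set ℕ, IsDescendant (T \ {σ'}) Λ'' ∧ genus Λ'' = γ) :
    ¬ ∃ Λ'' : Set ℕ, IsDescendant (T \ {σ}) Λ'' ∧ genus Λ'' = γ := by
  rintro ⟨L, ⟨hsg, hsub, hdesc⟩, hgen⟩
  apply hno
  obtain ⟨⟨hσpos, hσmem, hσnsum⟩, hσfrob⟩ := hσ
  obtain ⟨⟨hσ'pos, hσ'mem, hσ'nsum⟩, hσ'frob⟩ := hσ'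
  have hTc : Tᶜ.Finite := hT.cofinite
  have hgapT : ∀ x, x ∉ T → x ≤ frob T := fun x hx => le_csSup hTc.bddAbove hx
  have hbigT : ∀ x, frob T < x → x ∈ T := by
    intro x hx; by_contra h; exact absurd (hgapT x h) (not_le.mpr hx)
  have hchild : ∀ s, frob T < s → frob (T \ {s}) = s := by
    intro s hfs
    have hcomp : (T \ {s})ᶜ = Tᶜ ∪ {s} := by
      ext x
      simp only [Set.mem_compl_iff, Set.mem_diff, Set.mem_union, Set.mem_singleton_iff]
      tauto
    rw [frob, hcomp]
    apply le_antisymm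
    · apply csSup_le ⟨s, Or.inr rfl⟩
      rintro x hx
      rcases hx with hx | hx
      · exact le_of_lt (lt_of_le_of_lt (hgapT x hx) hfs)
      · exact le_of_eq hx
    · exact le_csSup ((hTc.union (Set.finite_singleton s)).bddAbove) (Or.inr rfl)
  have hfΛ : frob (T \ {σ}) = σ := hchild σ hσfrob
  have hfΛ' : frob (T \ {σ'}) = σ' := hchild σ' hσ'frob
  rw [hfΛ, hfΛ'] at hF
  -- basic facts about L
  have hLc : Lᶜ.Finite := hsg.cofinite
  have hσnotL : σ ∉ L := fun h => (hsub h).2 rfl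
  have hLT : ∀ x, x ∈ L → x ∈ T := fun x hx => (hsub hx).1
  have hgapL : ∀ x, x ∉ L → x ≤ frob L := fun x hx => le_csSup hLc.bddAbove hx
  set f := frob L with hfdef
  have hσf : σ ≤ f := hgapL σ hσnotL
  have hfnot : f ∉ L := Nat.sSup_mem ⟨σ, hσnotL⟩ hLc.bddAbove
  have hbigL : ∀ x, f < x → x ∈ L := by
    intro x hx; by_contra h; exact absurd (hgapL x h) (not_le.mpr hx)
  have hlow : ∀ x, x ∈ T → x < σ → x ∈ L := by
    intro x hxT hxσ
    by_contra h
    have hx : x ∈ (T \ {σ}) \ L := ⟨⟨hxT, fun he => absurd (Set.mem_singleton_iff.mp he ▸ hxσ) (lt_irrefl σ)⟩, h⟩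
    have := hdesc x hx
    rw [hfΛ] at this
    omega
  have hσ'L : σ' ∈ L := hlow σ' hσ'mem hF
  have hσ'f : σ' < f := lt_of_lt_of_le hF hσf
  have hfT : f ∈ T := hbigT f (lt_of_lt_of_le hσfrob hσf)
  have hfpos : 0 < f := lt_of_lt_of_le hσpos hσf
  -- the new semigroup
  refine ⟨(L \ {σ'}) ∪ {f}, ⟨?_, ?_, ?_⟩, ?_⟩
  · constructor
    · exact Or.inl ⟨hsg.zero_mem, fun h => absurd (Set.mem_singleton_iff.mp h) (by omega)⟩
    · intro a b ha hb
      have key : ∀ c : ℕ, c ∈ L → 0 < c → f + c ∈ (L \ {σ'}) ∪ {f} := by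
        intro c hc hcpos
        refine Or.inl ⟨hbigL _ (by omega), fun h => ?_⟩
        have : f + c = σ' := Set.mem_singleton_iff.mp h
        omega
      rcases ha with ⟨haL, haσ'⟩ | ha
      · rcases hb with ⟨hbL, hbσ'⟩ | hb
        · refine Or.inl ⟨hsg.add_mem haL hbL, fun h => ?_⟩
          have hab : a + b = σ' := Set.mem_singleton_iff.mp h
          rcases Nat.eq_zero_or_pos a with ha0 | ha0
          · exact hbσ' (Set.mem_singleton_iff.mpr (by omega))
          rcases Nat.eq_zero_or_pos b with hb0 | hb0
          · exact haσ' (Set.mem_singleton_iff.mpr (by omega))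
          exact hσ'nsum ⟨a, b, ha0, hb0, hLT a haL, hLT b hbL, hab⟩
        · have hb' : b = f := Set.mem_singleton_iff.mp hb
          rcases Nat.eq_zero_or_pos a with ha0 | ha0
          · subst hb'; exact Or.inr (Set.mem_singleton_iff.mpr (by omega))
          · subst hb'; rw [Nat.add_comm]; exact key a haL ha0
      · have ha' : a = f := Set.mem_singleton_iff.mp ha
        rcases hb with ⟨hbL, hbσ'⟩ | hb
        · rcases Nat.eq_zero_or_pos b with hb0 | hb0
          · subst ha'; exact Or.inr (Set.mem_singleton_iff.mpr (by omega))
          · subst ha'; exact key b hbL hb0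
        · have hb' : b = f := Set.mem_singleton_iff.mp hb
          subst ha'; subst hb'
          refine Or.inl ⟨hbigL _ (by omega), fun h => ?_⟩
          have : f + f = σ' := Set.mem_singleton_iff.mp h
          omega
    · apply Set.Finite.subset (hLc.union (Set.finite_singleton σ'))
      intro x hx
      simp only [Set.mem_compl_iff, Set.mem_union, Set.mem_diff, Set.mem_singleton_iff,
        not_or, not_and, not_not] at hx ⊢
      by_cases hxL : x ∈ L
      · exact Or.inr (hx.1 hxL)
      · exact Or.inl hxL
  · rintro x (⟨hxL, hxσ'⟩ | hx)
    · exact ⟨hLT x hxL, hxσ'⟩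
    · have : x = f := Set.mem_singleton_iff.mp hx
      subst this
      exact ⟨hfT, fun h => absurd (Set.mem_singleton_iff.mp h) (by omega)⟩
  · intro x hx
    rw [hfΛ']
    obtain ⟨⟨hxT, hxσ'⟩, hxD⟩ := hx
    by_contra hle
    push_neg at hle
    have hxlt : x < σ' := lt_of_le_of_ne hle (fun h => hxσ' (Set.mem_singleton_iff.mpr h))
    have hxL : x ∈ L := hlow x hxT (by omega)
    exact hxD (Or.inl ⟨hxL, fun h => hxσ' h⟩)
  · have hcomp : ((L \ {σ'}) ∪ {f})ᶜ = insert σ' (Lᶜ \ {f}) := by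
      ext x
      simp only [Set.mem_compl_iff, Set.mem_union, Set.mem_diff, Set.mem_singleton_iff,
        Set.mem_insert_iff, not_or, not_and, not_not]
      constructor
      · rintro ⟨h1, h2⟩
        by_cases hxL : x ∈ L
        · exact Or.inl (h1 hxL)
        · exact Or.inr ⟨hxL, h2⟩
      · rintro (rfl | ⟨h1, h2⟩)
        · exact ⟨fun _ => rfl, by omega⟩
        · exact ⟨fun h => absurd h h1, h2⟩
    rw [genus, hcomp]
    rw [Set.ncard_insert_of_notMem (by
      simp only [Set.mem_diff, Set.mem_singleton_iff, Set.mem_compl_iff, not_and, not_not]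
      intro h; exact absurd hσ'L h) hLc.diff]
    rw [Set.ncard_diff_singleton_add_one (show f ∈ Lᶜ from hfnot) hLc]
    exact hgen

end NumSgpPaper
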